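/- Enumerating the Calkin-Wilf tree breadth-first as a sequence q₁ = 1/1, q₂ = 1/2, q₃ = 2/1, …, the parity of q_N depends only on N mod 3: q_N is odd if N ≡ 1 (mod 3), has parity 'none' if N ≡ 2 (mod 3), and is even if N ≡ 0 (mod 3). Consequently each of the three parity classes has natural density 1/3 in this enumeration. -/

import Mathlib

/-- The Calkin-Wilf sequence: `cw 1 = 1`, and if `cw N = m/n` (reduced) then
`cw (2N) = m/(m+n) = cw N / (cw N + 1)` and `cw (2N+1) = (m+n)/n = cw N + 1`. -/
def cw : ℕ → ℚ
  | 0 => 0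
  | 1 => 1
  | n + 2 =>
    let q := cw ((n + 2) / 2)
    if (n + 2) % 2 = 0 then q / (q + 1) else q + 1
decreasing_by all_goals simp_wf; omega

lemma cw_eq (n : ℕ) (h : 2 ≤ n) :
    cw n = if n % 2 = 0 then cw (n / 2) / (cw (n / 2) + 1) else cw (n / 2) + 1 := by
  obtain ⟨m, rfl⟩ : ∃ m, n = m + 2 := ⟨n - 2, by omega⟩
  rw [cw]

lemma cw_one : cw 1 = 1 := by rw [cw]

lemma childR (q : ℚ) (hq : 0 < q) :
    (q + 1).num = q.num + q.den ∧ ((q + 1).den : ℤ) = q.den := by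
  have hden : (0 : ℤ) < (q.den : ℤ) := mod_cast q.pos
  have hd0 : ((q.den : ℤ) : ℚ) ≠ 0 := by exact_mod_cast hden.ne'
  have hq1 : q + 1 = ((q.num + q.den : ℤ) : ℚ) / ((q.den : ℤ) : ℚ) := by
    conv_lhs => rw [← Rat.num_div_den q]
    push_cast
    field_simp
  have hcopId : IsCoprime q.num (q.den : ℤ) :=
    Int.isCoprime_iff_nat_coprime.mpr q.reduced
  have hcop : Nat.Coprime (q.num + q.den).natAbs (q.den : ℤ).natAbs := by
    have : IsCoprime (q.num + (q.den : ℤ) * 1) (q.den : ℤ) := hcopId.add_mul_left_left 1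
    rw [mul_one] at this
    exact Int.isCoprime_iff_nat_coprime.mp this
  exact ⟨hq1 ▸ Rat.num_div_eq_of_coprime hden hcop,
    hq1 ▸ Rat.den_div_eq_of_coprime hden hcop⟩

lemma childL (q : ℚ) (hq : 0 < q) :
    (q / (q + 1)).num = q.num ∧ ((q / (q + 1)).den : ℤ) = q.num + q.den := by
  have hnum : (0 : ℤ) < q.num := Rat.num_pos.mpr hq
  have hden : (0 : ℤ) < (q.den : ℤ) := mod_cast q.pos
  have hsum : (0 : ℤ) < q.num + q.den := by omega
  have hd0 : ((q.den : ℤ) : ℚ) ≠ 0 := by exact_mod_cast hden.ne'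
  have hs0 : ((q.num + q.den : ℤ) : ℚ) ≠ 0 := by exact_mod_cast hsum.ne'
  have key : q * ((q.den : ℚ)) = ((q.num : ℚ)) := Rat.mul_den_eq_num q
  have hq1 : q / (q + 1) = ((q.num : ℤ) : ℚ) / ((q.num + q.den : ℤ) : ℚ) := by
    have hq10 : q + 1 ≠ 0 := by positivity
    rw [div_eq_div_iff hq10 hs0]
    push_cast
    rw [mul_add, key]
    ring
  have hcopId : IsCoprime q.num (q.den : ℤ) :=
    Int.isCoprime_iff_nat_coprime.mpr q.reduced
  have hcop : Nat.Coprime (q.num : ℤ).natAbs (q.num + q.den).natAbs := by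
    have : IsCoprime q.num ((q.den : ℤ) + q.num * 1) := hcopId.add_mul_left_right 1
    rw [mul_one] at this
    have := Int.isCoprime_iff_nat_coprime.mp this
    rwa [show (q.den : ℤ) + q.num = q.num + q.den by ring] at this
  exact ⟨hq1 ▸ Rat.num_div_eq_of_coprime hsum hcop,
    hq1 ▸ Rat.den_div_eq_of_coprime hsum hcop⟩

lemma cw_pos : ∀ N : ℕ, 1 ≤ N → 0 < cw N := by
  intro N
  induction N using Nat.strong_induction_on with
  | _ N ih =>
    intro hN
    by_cases h1 : N = 1
    · subst h1; rw [cw_one]; norm_num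
    · have h2 : 2 ≤ N := by omega
      have hq : 0 < cw (N / 2) := ih (N / 2) (by omega) (by omega)
      rw [cw_eq N h2]
      split
      · exact div_pos hq (by linarith)
      · linarith

lemma cw_parity : ∀ N : ℕ, 1 ≤ N →
    (N % 3 = 1 → Odd (cw N).num ∧ Odd ((cw N).den : ℤ)) ∧
    (N % 3 = 2 → Odd (cw N).num ∧ Even ((cw N).den : ℤ)) ∧
    (N % 3 = 0 → Even (cw N).num ∧ Odd ((cw N).den : ℤ)) := by
  intro N
  induction N using Nat.strong_induction_on with
  | _ N ih =>
    intro hN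
    by_cases h1 : N = 1
    · subst h1
      rw [cw_one]
      refine ⟨fun _ => ⟨odd_one, by norm_num⟩, fun h => by omega, fun h => by omega⟩
    · have h2 : 2 ≤ N := by omega
      set M := N / 2 with hMdef
      have hM1 : 1 ≤ M := by omega
      have hMlt : M < N := by omega
      have hq := cw_pos M hM1
      have hpar := ih M hMlt hM1
      rw [cw_eq N h2]
      by_cases hp2 : N % 2 = 0
      · have hNM : N = 2 * M := by omega
        rw [if_pos hp2]
        obtain ⟨hnum, hden⟩ := childL (cw M) hq
        rw [hnum, hden]
        refine ⟨fun h3 => ?_, fun h3 => ?_, fun h3 => ?_⟩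
        · obtain ⟨ha, hb⟩ := hpar.2.1 (by omega)
          rw [Int.odd_iff] at ha ⊢
          rw [Int.even_iff] at hb
          exact ⟨by omega, by rw [Int.odd_iff]; omega⟩
        · obtain ⟨ha, hb⟩ := hpar.1 (by omega)
          rw [Int.odd_iff] at ha hb
          exact ⟨by rw [Int.odd_iff]; omega, by rw [Int.even_iff]; omega⟩
        · obtain ⟨ha, hb⟩ := hpar.2.2 (by omega)
          rw [Int.even_iff] at ha
          rw [Int.odd_iff] at hb
          exact ⟨by rw [Int.even_iff]; omega, by rw [Int.odd_iff]; omega⟩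
      · have hNM : N = 2 * M + 1 := by omega
        rw [if_neg hp2]
        obtain ⟨hnum, hden⟩ := childR (cw M) hq
        rw [hnum, hden]
        refine ⟨fun h3 => ?_, fun h3 => ?_, fun h3 => ?_⟩
        · obtain ⟨ha, hb⟩ := hpar.2.2 (by omega)
          rw [Int.even_iff] at ha
          rw [Int.odd_iff] at hb
          exact ⟨by rw [Int.odd_iff]; omega, by rw [Int.odd_iff]; omega⟩
        · obtain ⟨ha, hb⟩ := hpar.2.1 (by omega)
          rw [Int.odd_iff] at ha
          rw [Int.even_iff] at hb
          exact ⟨by rw [Int.odd_iff]; omega, by rw [Int.even_iff]; omega⟩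
        · obtain ⟨ha, hb⟩ := hpar.1 (by omega)
          rw [Int.odd_iff] at ha hb
          exact ⟨by rw [Int.even_iff]; omega, by rw [Int.odd_iff]; omega⟩

lemma count_mod3 (r : ℕ) (hr : r < 3) : ∀ N : ℕ,
    ((Finset.Icc 1 N).filter (fun k => k % 3 = r)).card = (N + (3 - r) % 3) / 3 := by
  intro N
  induction N with
  | zero => simp <;> omega
  | succ n ih =>
    have hins : Finset.Icc 1 (n + 1) = insert (n + 1) (Finset.Icc 1 n) := by
      ext x; simp [Finset.mem_Icc]; omega
    rw [hins, Finset.filter_insert]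
    by_cases h : (n + 1) % 3 = r
    · rw [if_pos h, Finset.card_insert_of_notMem (by simp [Finset.mem_Icc])]
      rw [ih]; omega
    · rw [if_neg h, ih]; omega

lemma tendsto_third (f : ℕ → ℕ)
    (hf : ∀ N : ℕ, (N : ℤ) - 2 ≤ 3 * (f N : ℤ) ∧ 3 * (f N : ℤ) ≤ (N : ℤ) + 2) :
    Filter.Tendsto (fun N : ℕ => (f N : ℝ) / N) Filter.atTop (nhds (1 / 3)) := by
  have hlow : Filter.Tendsto (fun N : ℕ => ((N : ℝ) - 2) / (3 * N)) Filter.atTop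
      (nhds (1 / 3)) := by
    have h0 : Filter.Tendsto (fun N : ℕ => 1 / 3 - (2 / 3) * (1 / (N : ℝ))) Filter.atTop
        (nhds (1 / 3 - (2 / 3) * 0)) :=
      tendsto_const_nhds.sub (tendsto_const_nhds.mul tendsto_one_div_atTop_nhds_zero_nat)
    rw [mul_zero, sub_zero] at h0
    apply h0.congr'
    filter_upwards [Filter.eventually_ge_atTop 1] with N hN
    have hN0 : (0 : ℝ) < N := by exact_mod_cast hN
    field_simp
  have hhigh : Filter.Tendsto (fun N : ℕ => ((N : ℝ) + 2) / (3 * N)) Filter.atTop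
      (nhds (1 / 3)) := by
    have h0 : Filter.Tendsto (fun N : ℕ => 1 / 3 + (2 / 3) * (1 / (N : ℝ))) Filter.atTop
        (nhds (1 / 3 + (2 / 3) * 0)) :=
      tendsto_const_nhds.add (tendsto_const_nhds.mul tendsto_one_div_atTop_nhds_zero_nat)
    rw [mul_zero, add_zero] at h0
    apply h0.congr'
    filter_upwards [Filter.eventually_ge_atTop 1] with N hN
    have hN0 : (0 : ℝ) < N := by exact_mod_cast hN
    field_simp
  apply tendsto_of_tendsto_of_tendsto_of_le_of_le' hlow hhigh
  · filter_upwards [Filter.eventually_ge_atTop 1] with N hN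
    have hN0 : (0 : ℝ) < N := by exact_mod_cast hN
    have h1 : ((N : ℝ) - 2) ≤ 3 * (f N : ℝ) := by exact_mod_cast (hf N).1
    rw [div_le_div_iff₀ (by positivity) hN0]
    nlinarith
  · filter_upwards [Filter.eventually_ge_atTop 1] with N hN
    have hN0 : (0 : ℝ) < N := by exact_mod_cast hN
    have h1 : 3 * (f N : ℝ) ≤ (N : ℝ) + 2 := by exact_mod_cast (hf N).2
    rw [div_le_div_iff₀ hN0 (by positivity)]
    nlinarith

lemma exclusive (k : ℕ) (hk : 1 ≤ k) :
    (Odd (cw k).num ∧ Odd ((cw k).den : ℤ) ↔ k % 3 = 1) ∧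
    (Odd (cw k).num ∧ Even ((cw k).den : ℤ) ↔ k % 3 = 2) ∧
    (Even (cw k).num ∧ Odd ((cw k).den : ℤ) ↔ k % 3 = 0) := by
  obtain ⟨h1, h2, h0⟩ := cw_parity k hk
  have key : ∀ m : ℤ, ¬(Odd m ∧ Even m) := by
    intro m ⟨ho, he⟩
    rw [Int.odd_iff] at ho; rw [Int.even_iff] at he; omega
  refine ⟨⟨fun h => ?_, h1⟩, ⟨fun h => ?_, h2⟩, ⟨fun h => ?_, h0⟩⟩
  · rcases (by omega : k % 3 = 0 ∨ k % 3 = 1 ∨ k % 3 = 2) with h3 | h3 | h3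
    · exact absurd ⟨h.1, (h0 h3).1⟩ (key _)
    · exact h3
    · exact absurd ⟨h.2, (h2 h3).2⟩ (key _)
  · rcases (by omega : k % 3 = 0 ∨ k % 3 = 1 ∨ k % 3 = 2) with h3 | h3 | h3
    · exact absurd ⟨h.1, (h0 h3).1⟩ (key _)
    · exact absurd ⟨(h1 h3).2, h.2⟩ (key _)
    · exact h3
  · rcases (by omega : k % 3 = 0 ∨ k % 3 = 1 ∨ k % 3 = 2) with h3 | h3 | h3
    · exact h3
    · exact absurd ⟨(h1 h3).1, h.1⟩ (key _)
    · exact absurd ⟨(h2 h3).1, h.1⟩ (key _)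

/-- In the breadth-first Calkin-Wilf enumeration of the positive rationals, the
parity of the N-th term depends only on N mod 3: odd if N ≡ 1, none if N ≡ 2,
even if N ≡ 0 (mod 3); consequently each of the three parity classes has
natural density 1/3 in this enumeration. -/
theorem calkin_wilf_parity_pattern_and_density :
    (∀ N : ℕ, 1 ≤ N →
      (N % 3 = 1 → Odd (cw N).num ∧ Odd ((cw N).den : ℤ)) ∧
      (N % 3 = 2 → Odd (cw N).num ∧ Even ((cw N).den : ℤ)) ∧
      (N % 3 = 0 → Even (cw N).num ∧ Odd ((cw N).den : ℤ))) ∧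
    Filter.Tendsto (fun N : ℕ =>
        (((Finset.Icc 1 N).filter (fun k => Odd (cw k).num ∧ Odd ((cw k).den : ℤ))).card : ℝ) / N)
      Filter.atTop (nhds (1 / 3)) ∧
    Filter.Tendsto (fun N : ℕ =>
        (((Finset.Icc 1 N).filter (fun k => Odd (cw k).num ∧ Even ((cw k).den : ℤ))).card : ℝ) / N)
      Filter.atTop (nhds (1 / 3)) ∧
    Filter.Tendsto (fun N : ℕ =>
        (((Finset.Icc 1 N).filter (fun k => Even (cw k).num ∧ Odd ((cw k).den : ℤ))).card : ℝ) / N)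
      Filter.atTop (nhds (1 / 3)) := by
  have hset1 : ∀ N : ℕ, (Finset.Icc 1 N).filter (fun k => Odd (cw k).num ∧ Odd ((cw k).den : ℤ))
      = (Finset.Icc 1 N).filter (fun k => k % 3 = 1) := by
    intro N
    apply Finset.filter_congr
    intro k hk
    simp only [Finset.mem_Icc] at hk
    exact_mod_cast (exclusive k hk.1).1
  have hset2 : ∀ N : ℕ, (Finset.Icc 1 N).filter (fun k => Odd (cw k).num ∧ Even ((cw k).den : ℤ))
      = (Finset.Icc 1 N).filter (fun k => k % 3 = 2) := by
    intro N
    apply Finset.filter_congr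
    intro k hk
    simp only [Finset.mem_Icc] at hk
    exact_mod_cast (exclusive k hk.1).2.1
  have hset0 : ∀ N : ℕ, (Finset.Icc 1 N).filter (fun k => Even (cw k).num ∧ Odd ((cw k).den : ℤ))
      = (Finset.Icc 1 N).filter (fun k => k % 3 = 0) := by
    intro N
    apply Finset.filter_congr
    intro k hk
    simp only [Finset.mem_Icc] at hk
    exact_mod_cast (exclusive k hk.1).2.2
  refine ⟨cw_parity, ?_, ?_, ?_⟩
  · refine (tendsto_third (fun N => ((Finset.Icc 1 N).filter (fun k => k % 3 = 1)).card) ?_).congr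
      (fun N => by rw [hset1 N])
    intro N
    simp only [count_mod3 1 (by norm_num)]
    omega
  · refine (tendsto_third (fun N => ((Finset.Icc 1 N).filter (fun k => k % 3 = 2)).card) ?_).congr
      (fun N => by rw [hset2 N])
    intro N
    simp only [count_mod3 2 (by norm_num)]
    omega
  · refine (tendsto_third (fun N => ((Finset.Icc 1 N).filter (fun k => k % 3 = 0)).card) ?_).congr
      (fun N => by rw [hset0 N])
    intro N
    simp only [count_mod3 0 (by norm_num)]
    omega
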